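/- Conditional decomposition lemma: if X_D = X_S ∪ X_R with X_S ∩ X_R = ∅, then β^k_D = β^k_S + β^k_{R|S}, where the conditional index β^k_{R|S} is defined via the average squared MMD between f_{Y|X_D} and f_{Y|X_S} normalized by E[k(Y,Y)] − E[k(Y,Y')]. -/

import Mathlib

open MeasureTheory
open scoped RealInnerProductSpace

private lemma condExpL2_ae_eq_condexp_aux {Ω H : Type*} [m0 : MeasurableSpace Ω]
    [NormedAddCommGroup H] [InnerProductSpace ℝ H] [CompleteSpace H]
    {μ : Measure Ω} [IsProbabilityMeasure μ]
    {m : MeasurableSpace Ω} (hm : m ≤ m0) {Z : Ω → H}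
    (hZ : Integrable Z μ) (hZL2 : MemLp Z 2 μ) :
    (condExpL2 H ℝ hm (hZL2.toLp Z) : Ω → H) =ᵐ[μ] μ[Z|m] := by
  letI : MeasurableSpace Ω := m0
  refine ae_eq_condExp_of_forall_setIntegral_eq hm hZ
    (fun s _ hμs => integrableOn_condExpL2_of_measure_ne_top hm hμs.ne _)
    (fun s hs hμs => ?_) (aestronglyMeasurable_condExpL2 hm _)
  rw [integral_condExpL2_eq hm (hZL2.toLp Z) hs hμs.ne]
  exact setIntegral_congr_ae (hm s hs) (hZL2.coeFn_toLp.mono fun x hx _ => hx)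

/-- **Conditional decomposition lemma: `β^k_D = β^k_S + β^k_{R|S}`.**
Work on a probability space `(Ω, m0, μ)` with output feature map `Z ω = k(·,Y(ω))`
(so `μ_Y = ∫ Z dμ`, and `μ[Z|m]` is the conditional mean embedding of the output
given the inputs generating the σ-algebra `m`).  Let `mS, mR` be the σ-algebras
generated by the disjoint input groups `X_S` and `X_R`; then `X_D = X_S ∪ X_R`
generates `mD = mS ⊔ mR`.  With the normalization `E[k(Y,Y)] − E[k(Y,Y')] =
E[‖Z‖²] − ‖μ_Y‖²` (assumed positive), the averaged squared MMDs satisfy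
`β^k_D = β^k_S + β^k_{R|S}` where
`β^k_A = E[‖μ[Z|m_A] − μ_Y‖²]/den` and `β^k_{R|S} = E[‖μ[Z|m_D] − μ[Z|m_S]‖²]/den`. -/
theorem beta_conditional_decomposition
    {Ω H : Type*} [m0 : MeasurableSpace Ω]
    [NormedAddCommGroup H] [InnerProductSpace ℝ H] [CompleteSpace H]
    (μ : Measure Ω) [IsProbabilityMeasure μ]
    (Z : Ω → H) (hZ : Integrable Z μ)
    (hZ2 : Integrable (fun ω => ‖Z ω‖ ^ 2) μ)
    (mS mR : MeasurableSpace Ω) (hS : mS ≤ m0) (hR : mR ≤ m0)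
    (hden : 0 < (∫ ω, ‖Z ω‖ ^ 2 ∂μ) - ‖∫ ω', Z ω' ∂μ‖ ^ 2) :
    (∫ ω, ‖(μ[Z|mS ⊔ mR]) ω - ∫ ω', Z ω' ∂μ‖ ^ 2 ∂μ) /
        ((∫ ω, ‖Z ω‖ ^ 2 ∂μ) - ‖∫ ω', Z ω' ∂μ‖ ^ 2)
      = (∫ ω, ‖(μ[Z|mS]) ω - ∫ ω', Z ω' ∂μ‖ ^ 2 ∂μ) /
          ((∫ ω, ‖Z ω‖ ^ 2 ∂μ) - ‖∫ ω', Z ω' ∂μ‖ ^ 2)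
        + (∫ ω, ‖(μ[Z|mS ⊔ mR]) ω - (μ[Z|mS]) ω‖ ^ 2 ∂μ) /
            ((∫ ω, ‖Z ω‖ ^ 2 ∂μ) - ‖∫ ω', Z ω' ∂μ‖ ^ 2) := by
  letI : MeasurableSpace Ω := m0
  set c : H := ∫ ω', Z ω' ∂μ with hc
  have hmD : mS ⊔ mR ≤ m0 := sup_le hS hR
  have hZL2 : MemLp Z 2 μ := (memLp_two_iff_integrable_sq_norm hZ.1).mpr hZ2
  set fL : Lp H 2 μ := hZL2.toLp Z with hfL
  set AL : Lp H 2 μ := (condExpL2 H ℝ hmD fL : Lp H 2 μ) with hAL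
  set BL : Lp H 2 μ := (condExpL2 H ℝ hS fL : Lp H 2 μ) with hBL
  set cL : Lp H 2 μ := (memLp_const c).toLp (fun _ => c) with hcLdef
  have hA : (AL : Ω → H) =ᵐ[μ] μ[Z|mS ⊔ mR] := condExpL2_ae_eq_condexp_aux hmD hZ hZL2
  have hB : (BL : Ω → H) =ᵐ[μ] μ[Z|mS] := condExpL2_ae_eq_condexp_aux hS hZ hZL2
  have hcL : (cL : Ω → H) =ᵐ[μ] fun _ => c := MemLp.coeFn_toLp _
  have key : ∀ g : Lp H 2 μ, ∫ ω, ‖g ω‖ ^ 2 ∂μ = ‖g‖ ^ 2 := by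
    intro g
    rw [← real_inner_self_eq_norm_sq, L2.inner_def]
    exact integral_congr_ae (Filter.Eventually.of_forall fun ω =>
      (real_inner_self_eq_norm_sq _).symm)
  have hAc : (∫ ω, ‖(μ[Z|mS ⊔ mR]) ω - c‖ ^ 2 ∂μ) = ‖AL - cL‖ ^ 2 := by
    rw [← key (AL - cL)]
    refine integral_congr_ae ?_
    filter_upwards [hA, hcL, Lp.coeFn_sub AL cL] with ω h1 h2 h3
    rw [h3, Pi.sub_apply, h1, h2]
  have hBc : (∫ ω, ‖(μ[Z|mS]) ω - c‖ ^ 2 ∂μ) = ‖BL - cL‖ ^ 2 := by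
    rw [← key (BL - cL)]
    refine integral_congr_ae ?_
    filter_upwards [hB, hcL, Lp.coeFn_sub BL cL] with ω h1 h2 h3
    rw [h3, Pi.sub_apply, h1, h2]
  have hABi : (∫ ω, ‖(μ[Z|mS ⊔ mR]) ω - (μ[Z|mS]) ω‖ ^ 2 ∂μ) = ‖AL - BL‖ ^ 2 := by
    rw [← key (AL - BL)]
    refine integral_congr_ae ?_
    filter_upwards [hA, hB, Lp.coeFn_sub AL BL] with ω h1 h2 h3
    rw [h3, Pi.sub_apply, h1, h2]
  have hmeas_c : AEStronglyMeasurable[mS] (cL : Ω → H) μ :=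
    ⟨fun _ => c, stronglyMeasurable_const, hcL⟩
  have hmeas_B : AEStronglyMeasurable[mS] (BL : Ω → H) μ :=
    aestronglyMeasurable_condExpL2 hS fL
  have hg : AEStronglyMeasurable[mS] ((BL - cL : Lp H 2 μ) : Ω → H) μ :=
    (hmeas_B.sub hmeas_c).congr (Lp.coeFn_sub BL cL).symm
  have h1 : ⟪AL, BL - cL⟫ = ⟪fL, BL - cL⟫ :=
    inner_condExpL2_eq_inner_fun hmD fL (BL - cL) (hg.mono le_sup_left)
  have h2 : ⟪BL, BL - cL⟫ = ⟪fL, BL - cL⟫ :=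
    inner_condExpL2_eq_inner_fun hS fL (BL - cL) hg
  have hortho : ⟪AL - BL, BL - cL⟫ = (0 : ℝ) := by
    rw [inner_sub_left, h1, h2, sub_self]
  have hnorm : ‖AL - cL‖ ^ 2 = ‖BL - cL‖ ^ 2 + ‖AL - BL‖ ^ 2 := by
    have hsplit : AL - cL = (AL - BL) + (BL - cL) := by abel
    rw [hsplit, norm_add_sq_real, hortho]
    ring
  rw [hAc, hBc, hABi, hnorm, add_comm (‖BL - cL‖ ^ 2), add_div, add_comm]
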